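/- arXiv:2009.09841 — 2 statements merged into one kernel-verified Lean document; each statement's English description precedes it below -/
import Mathlib

section
/- Let m, n be positive natural numbers, let φ : Fin n → Fin m → ℝ, let Φ, Φ̂ : Fin n → ℝ, let α > 0, and let π_α(Φ) = 1 / (1 + exp(α·Φ)). Define Δ²(L) := (1/m) · ∑_{j=1}^m ( ∑_{i=1}^n (π_α(Φ̂_i) − π_α(Φ_i)) · φ_{i,j} )². Then Δ²(L) ≤ (α²/(16·m)) · ( ∑_{i=1}^n (Φ̂_i − Φ_i)² ) · ( ∑_{i=1}^n ∑_{j=1}^m φ_{i,j}² ). In particular, the deviation of the validation loss under inaccurate influence estimates is controlled by the hyper-parameter α. -/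
open Finset

lemma sigmoid_lip (x y : ℝ) :
    |1 / (1 + Real.exp x) - 1 / (1 + Real.exp y)| ≤ (1 / 4) * |x - y| := by
  have hne : ∀ t : ℝ, (1 + Real.exp t) ≠ 0 := fun t =>
    ne_of_gt (by positivity)
  have hd : ∀ t : ℝ, HasDerivAt (fun t => (1 + Real.exp t)⁻¹)
      (-(Real.exp t) / (1 + Real.exp t) ^ 2) t := by
    intro t
    have : HasDerivAt (fun t : ℝ => 1 + Real.exp t) (Real.exp t) t :=
      (Real.hasDerivAt_exp t).const_add 1
    exact this.inv (hne t)
  have key := Convex.norm_image_sub_le_of_norm_deriv_le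
    (f := fun t => (1 + Real.exp t)⁻¹) (s := Set.univ) (C := 1/4)
    (fun z _ => (hd z).differentiableAt)
    (fun z _ => by
      rw [(hd z).deriv]
      have h1 := Real.exp_pos z
      rw [Real.norm_eq_abs, abs_div, abs_neg, abs_of_pos h1,
        abs_of_pos (show (0:ℝ) < (1 + Real.exp z) ^ 2 by positivity),
        div_le_iff₀ (by positivity)]
      nlinarith [sq_nonneg (1 - Real.exp z)])
    convex_univ (Set.mem_univ y) (Set.mem_univ x)
  simpa [Real.norm_eq_abs, one_div] using key

/-- Proposition 1 combined with the Lipschitz property of the sigmoid sampling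
function: the squared deviation of the validation loss under inaccurate influence
estimates is controlled by the hyper-parameter `α`. -/
theorem influence_subsampling_deviation_bound_sigmoid
    (m n : ℕ) (hm : 0 < m) (hn : 0 < n)
    (φ : Fin n → Fin m → ℝ) (Φ Φhat : Fin n → ℝ) (α : ℝ) (hα : 0 < α) :
    (1 / (m : ℝ)) *
        ∑ j : Fin m,
          (∑ i : Fin n,
            (1 / (1 + Real.exp (α * Φhat i)) - 1 / (1 + Real.exp (α * Φ i))) * φ i j) ^ 2 ≤
      (α ^ 2 / (16 * (m : ℝ))) * (∑ i : Fin n, (Φhat i - Φ i) ^ 2) *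
        (∑ i : Fin n, ∑ j : Fin m, (φ i j) ^ 2) := by
  set d : Fin n → ℝ := fun i =>
    1 / (1 + Real.exp (α * Φhat i)) - 1 / (1 + Real.exp (α * Φ i)) with hd
  have hdsq : ∀ i, d i ^ 2 ≤ α ^ 2 / 16 * (Φhat i - Φ i) ^ 2 := by
    intro i
    have h := sigmoid_lip (α * Φhat i) (α * Φ i)
    have h2 : |d i| ≤ α / 4 * |Φhat i - Φ i| := by
      calc |d i| ≤ (1/4) * |α * Φhat i - α * Φ i| := h
        _ = α / 4 * |Φhat i - Φ i| := by
          rw [← mul_sub, abs_mul, abs_of_pos hα]; ring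
    rw [← sq_abs (d i), ← sq_abs (Φhat i - Φ i)]
    calc |d i| ^ 2 ≤ (α / 4 * |Φhat i - Φ i|) ^ 2 :=
          pow_le_pow_left₀ (abs_nonneg _) h2 2
      _ = α ^ 2 / 16 * |Φhat i - Φ i| ^ 2 := by ring
  have hsum_d : ∑ i, d i ^ 2 ≤ α ^ 2 / 16 * ∑ i, (Φhat i - Φ i) ^ 2 := by
    rw [mul_sum]; exact sum_le_sum fun i _ => hdsq i
  have hCS : ∀ j : Fin m, (∑ i, d i * φ i j) ^ 2 ≤ (∑ i, d i ^ 2) * (∑ i, φ i j ^ 2) :=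
    fun j => sum_mul_sq_le_sq_mul_sq _ _ _
  have step : ∑ j : Fin m, (∑ i, d i * φ i j) ^ 2 ≤
      (α ^ 2 / 16 * ∑ i, (Φhat i - Φ i) ^ 2) * ∑ i, ∑ j, φ i j ^ 2 := by
    have heq : ∑ j : Fin m, (∑ i, d i ^ 2) * (∑ i, φ i j ^ 2)
        = (∑ i, d i ^ 2) * ∑ i, ∑ j, φ i j ^ 2 := by
      rw [← Finset.mul_sum, Finset.sum_comm]
    refine le_trans (sum_le_sum fun j _ => hCS j) (heq.le.trans ?_)
    exact mul_le_mul_of_nonneg_right hsum_d (by positivity)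
  have hm' : (0:ℝ) < m := by exact_mod_cast hm
  calc (1 / (m:ℝ)) * ∑ j : Fin m, (∑ i, d i * φ i j) ^ 2
      ≤ (1 / (m:ℝ)) * ((α ^ 2 / 16 * ∑ i, (Φhat i - Φ i) ^ 2) * ∑ i, ∑ j, φ i j ^ 2) :=
        mul_le_mul_of_nonneg_left step (by positivity)
    _ = (α ^ 2 / (16 * (m : ℝ))) * (∑ i, (Φhat i - Φ i) ^ 2) * (∑ i, ∑ j, φ i j ^ 2) := by
        field_simp
end

section
/- Let n ∈ ℕ be positive, let ℓ_1, …, ℓ_n : ℝ^d → ℝ, ℓ : ℝ^d → ℝ, and ℓ^v : ℝ^d → ℝ be differentiable functions with differentiable gradients, let θ : ℝ → ℝ^d be a differentiable curve with θ(0) = θ̂ satisfying (1/n)·∑_{i'} ∇ℓ_{i'}(θ(ε)) + ε·∇ℓ(θ(ε)) = 0 for all ε ∈ ℝ, and assume H := (1/n)·∑_{i'} ∇²ℓ_{i'}(θ̂) is invertible. Then the derivative of the map ε ↦ ℓ^v(θ(ε)) at ε = 0 equals −⟪∇ℓ^v(θ̂), H^{−1} ∇ℓ(θ̂)⟫. 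-/
open Finset

/-- Closed-form influence function (Eq. (11)): under the same setting as the
influence-function parameter derivative, the derivative of the validation loss
along the perturbed-minimizer curve at `ε = 0` equals
`−⟪∇ℓᵛ(θ̂), H⁻¹ ∇ℓ(θ̂)⟫`. -/
theorem influence_function_validation_loss_derivative
    (d n : ℕ) (hn : 0 < n)
    (ℓs : Fin n → EuclideanSpace ℝ (Fin d) → ℝ)
    (ℓ : EuclideanSpace ℝ (Fin d) → ℝ)
    (ℓv : EuclideanSpace ℝ (Fin d) → ℝ)
    (hℓs : ∀ i, Differentiable ℝ (ℓs i))
    (hℓs' : ∀ i, Differentiable ℝ (fun x => gradient (ℓs i) x))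
    (hℓ : Differentiable ℝ ℓ)
    (hℓ' : Differentiable ℝ (fun x => gradient ℓ x))
    (hℓv : Differentiable ℝ ℓv)
    (hℓv' : Differentiable ℝ (fun x => gradient ℓv x))
    (θ : ℝ → EuclideanSpace ℝ (Fin d)) (hθ : Differentiable ℝ θ)
    (θhat : EuclideanSpace ℝ (Fin d)) (hθ0 : θ 0 = θhat)
    (hopt : ∀ ε : ℝ,
      (1 / (n : ℝ)) • ∑ i : Fin n, gradient (ℓs i) (θ ε) + ε • gradient ℓ (θ ε) = 0)
    (H : EuclideanSpace ℝ (Fin d) →L[ℝ] EuclideanSpace ℝ (Fin d))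
    (hH : H = (1 / (n : ℝ)) •
      ∑ i : Fin n, fderiv ℝ (fun x => gradient (ℓs i) x) θhat)
    (hHunit : IsUnit H) :
    deriv (fun ε : ℝ => ℓv (θ ε)) 0 =
      -(inner ℝ (gradient ℓv θhat) ((Ring.inverse H) (gradient ℓ θhat)) : ℝ) := by
  set v : EuclideanSpace ℝ (Fin d) := deriv θ 0 with hv
  have hθd : HasDerivAt θ v 0 := (hθ 0).hasDerivAt
  -- derivative of each gradient along the curve
  have hG : ∀ i : Fin n, HasDerivAt (fun ε => gradient (ℓs i) (θ ε))
      ((fderiv ℝ (fun x => gradient (ℓs i) x) θhat) v) 0 := by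
    intro i
    have := ((hℓs' i (θ 0)).hasFDerivAt).comp_hasDerivAt 0 hθd
    rwa [hθ0] at this
  have hsum : HasDerivAt (fun ε => ∑ i : Fin n, gradient (ℓs i) (θ ε))
      (∑ i : Fin n, (fderiv ℝ (fun x => gradient (ℓs i) x) θhat) v) 0 :=
    HasDerivAt.fun_sum (fun i _ => hG i)
  have h1 : HasDerivAt (fun ε => (1 / (n : ℝ)) • ∑ i : Fin n, gradient (ℓs i) (θ ε))
      ((1 / (n : ℝ)) • ∑ i : Fin n, (fderiv ℝ (fun x => gradient (ℓs i) x) θhat) v) 0 :=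
    hsum.fun_const_smul _
  have hGℓ : HasDerivAt (fun ε => gradient ℓ (θ ε))
      ((fderiv ℝ (fun x => gradient ℓ x) θhat) v) 0 := by
    have := ((hℓ' (θ 0)).hasFDerivAt).comp_hasDerivAt 0 hθd
    rwa [hθ0] at this
  have h2 : HasDerivAt (fun ε : ℝ => ε • gradient ℓ (θ ε))
      ((0 : ℝ) • (fderiv ℝ (fun x => gradient ℓ x) θhat) v
        + (1 : ℝ) • gradient ℓ (θ 0)) 0 :=
    (hasDerivAt_id 0).smul hGℓ
  have hF : HasDerivAt (fun ε : ℝ =>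
      (1 / (n : ℝ)) • ∑ i : Fin n, gradient (ℓs i) (θ ε) + ε • gradient ℓ (θ ε))
      ((1 / (n : ℝ)) • ∑ i : Fin n, (fderiv ℝ (fun x => gradient (ℓs i) x) θhat) v
        + ((0 : ℝ) • (fderiv ℝ (fun x => gradient ℓ x) θhat) v
          + (1 : ℝ) • gradient ℓ (θ 0))) 0 := h1.add h2
  have hFzero : HasDerivAt (fun ε : ℝ =>
      (1 / (n : ℝ)) • ∑ i : Fin n, gradient (ℓs i) (θ ε) + ε • gradient ℓ (θ ε))
      (0 : EuclideanSpace ℝ (Fin d)) 0 := by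
    have : (fun ε : ℝ =>
        (1 / (n : ℝ)) • ∑ i : Fin n, gradient (ℓs i) (θ ε) + ε • gradient ℓ (θ ε))
        = fun _ => (0 : EuclideanSpace ℝ (Fin d)) := funext hopt
    rw [this]; exact hasDerivAt_const 0 0
  have hkey : H v + gradient ℓ θhat = 0 := by
    have h := hF.unique hFzero
    rw [zero_smul, one_smul, zero_add, hθ0] at h
    rw [hH]
    rw [ContinuousLinearMap.smul_apply, ContinuousLinearMap.sum_apply]
    exact h
  have hv_eq : v = -(Ring.inverse H) (gradient ℓ θhat) := by
    have hinv : (Ring.inverse H) * H = 1 := Ring.inverse_mul_cancel H hHunit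
    have : (Ring.inverse H) (H v + gradient ℓ θhat) = (Ring.inverse H) 0 := by
      rw [hkey]
    rw [map_add, map_zero] at this
    have hHv : (Ring.inverse H) (H v) = v := by
      have := congrArg (fun T : EuclideanSpace ℝ (Fin d) →L[ℝ] EuclideanSpace ℝ (Fin d) => T v) hinv
      simpa [ContinuousLinearMap.mul_apply] using this
    rw [hHv] at this
    exact eq_neg_of_add_eq_zero_left this
  have hchain : HasDerivAt (fun ε : ℝ => ℓv (θ ε))
      ((InnerProductSpace.toDual ℝ (EuclideanSpace ℝ (Fin d)) (gradient ℓv θhat)) v) 0 := by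
    have hg : HasFDerivAt ℓv (InnerProductSpace.toDual ℝ (EuclideanSpace ℝ (Fin d)) (gradient ℓv θhat)) (θ 0) := by
      rw [hθ0]
      exact ((hℓv θhat).hasGradientAt).hasFDerivAt
    exact hg.comp_hasDerivAt 0 hθd
  rw [hchain.deriv, InnerProductSpace.toDual_apply_apply, hv_eq, inner_neg_right]
end
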